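/- arXiv:0705.0050 — 2 statements merged into one kernel-verified Lean document; each statement's English description precedes it below -/
import Mathlib

section
/- If f, g ∈ ℤ^{m|n}_+ and f ⪰ g in the super Bruhat ordering, then #f = #g, i.e., the degree of atypicality is constant on comparable elements. -/
/-!
Statement 5: if `f, g ∈ ℤ^{m|n}_+` and `f ⪰ g` in the super Bruhat ordering, then `#f = #g`,
i.e. the degree of atypicality is constant on comparable elements.

The super Bruhat ordering is the reflexive-transitive closure of the elementary lowering
relation `f ↓ g`, where `g` is (the reordering into `ℤ^{m|n}_+` of) either
(1) `f − d_i + d_j` for some `i < 0 < j` with `f(i) = f(j)`,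
(2) `f·τ_{ij}` for some `i < j < 0` with `f(i) > f(j)`, or
(3) `f·τ_{ij}` for some `0 < i < j` with `f(i) < f(j)`.
"Reordering" is recorded via equality of the multisets of values on the negative and on the
positive indices.
-/

open scoped BigOperators

namespace Stmt5

noncomputable def Ineg (m : ℕ) : Finset ℤ := Finset.Icc (-(m : ℤ)) (-1)
noncomputable def Ipos (n : ℕ) : Finset ℤ := Finset.Icc 1 (n : ℤ)

def ZPlus (m n : ℕ) (f : ℤ → ℤ) : Prop :=
  (∀ i j, i ∈ Ineg m → j ∈ Ineg m → i < j → f j < f i) ∧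
  (∀ i j, i ∈ Ipos n → j ∈ Ipos n → i < j → f i < f j)

/-- `g` has the same multiset of values as `h` on the negative and on the positive block,
i.e. `g` is a reordering (conjugate under `S_m × S_n`) of `h`. -/
def ConjEq (m n : ℕ) (g h : ℤ → ℤ) : Prop :=
  Multiset.map g (Ineg m).val = Multiset.map h (Ineg m).val ∧
  Multiset.map g (Ipos n).val = Multiset.map h (Ipos n).val

/-- `f·τ_{ij}`. -/
def swapFn (f : ℤ → ℤ) (i j : ℤ) : ℤ → ℤ :=
  fun k => if k = i then f j else if k = j then f i else f k

/-- `f − d_i + d_j` for `i < 0 < j` (both values drop by 1 since `d_k = −sgn(k) δ_k`). -/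
def lowerFn (f : ℤ → ℤ) (i j : ℤ) : ℤ → ℤ :=
  fun k => if k = i then f i - 1 else if k = j then f j - 1 else f k

/-- The elementary relation `f ↓ g` of the super Bruhat ordering, between elements of
`ℤ^{m|n}_+`. -/
def DownStep (m n : ℕ) (f g : ℤ → ℤ) : Prop :=
  ZPlus m n f ∧ ZPlus m n g ∧
    ((∃ i ∈ Ineg m, ∃ j ∈ Ipos n, f i = f j ∧ ConjEq m n g (lowerFn f i j)) ∨
     (∃ i ∈ Ineg m, ∃ j ∈ Ineg m, i < j ∧ f j < f i ∧ ConjEq m n g (swapFn f i j)) ∨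
     (∃ i ∈ Ipos n, ∃ j ∈ Ipos n, i < j ∧ f i < f j ∧ ConjEq m n g (swapFn f i j)))

/-- `f ⪰ g` in the super Bruhat ordering. -/
def SuperBruhatGE (m n : ℕ) (f g : ℤ → ℤ) : Prop :=
  Relation.ReflTransGen (DownStep m n) f g

/-- The degree of atypicality: the number of pairs `(i,j)`, `i<0<j`, with `f(i) = f(j)`. -/
noncomputable def atyp (m n : ℕ) (f : ℤ → ℤ) : ℕ :=
  (((Ineg m) ×ˢ (Ipos n)).filter fun p => f p.1 = f p.2).card

lemma ne_of_blocks {m n : ℕ} {i j : ℤ} (hi : i ∈ Ineg m) (hj : j ∈ Ipos n) : i ≠ j := by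
  simp only [Ineg, Ipos, Finset.mem_Icc] at hi hj; omega

lemma injOn_neg {m n : ℕ} {f : ℤ → ℤ} (hf : ZPlus m n f) :
    ∀ a ∈ Ineg m, ∀ b ∈ Ineg m, f a = f b → a = b := by
  intro a ha b hb hab
  rcases lt_trichotomy a b with h | h | h
  · have := hf.1 a b ha hb h; omega
  · exact h
  · have := hf.1 b a hb ha h; omega

lemma injOn_pos {m n : ℕ} {f : ℤ → ℤ} (hf : ZPlus m n f) :
    ∀ a ∈ Ipos n, ∀ b ∈ Ipos n, f a = f b → a = b := by
  intro a ha b hb hab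
  rcases lt_trichotomy a b with h | h | h
  · have := hf.2 a b ha hb h; omega
  · exact h
  · have := hf.2 b a hb ha h; omega

/-- atypicality depends only on the multisets of values on the two blocks. -/
lemma atyp_eq (m n : ℕ) (f : ℤ → ℤ) :
    atyp m n f =
      (((Ineg m).val.map f).map (fun a => ((Ipos n).val.map f).count a)).sum := by
  classical
  unfold atyp
  rw [Finset.card_filter, Finset.sum_product]
  have hinner : ∀ i : ℤ, (∑ j ∈ Ipos n, if f i = f j then 1 else 0)
      = ((Ipos n).val.map f).count (f i) := by
    intro i
    rw [Multiset.count_map]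
    rw [← Finset.card_filter]
    rfl
  calc (∑ i ∈ Ineg m, ∑ j ∈ Ipos n, if f i = f j then 1 else 0)
      = ∑ i ∈ Ineg m, ((Ipos n).val.map f).count (f i) := by
        exact Finset.sum_congr rfl (fun i _ => hinner i)
    _ = (((Ineg m).val.map f).map (fun a => ((Ipos n).val.map f).count a)).sum := by
        rw [Multiset.map_map]
        rfl

lemma atyp_of_conjEq {m n : ℕ} {g h : ℤ → ℤ} (hc : ConjEq m n g h) :
    atyp m n g = atyp m n h := by
  rw [atyp_eq, atyp_eq, hc.1, hc.2]

/-- Precomposing with a transposition of two elements of a nodup multiset does not change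
the image multiset. -/
lemma map_swapFn_eq {f : ℤ → ℤ} {s : Multiset ℤ} (hs : s.Nodup) {i j : ℤ}
    (hi : i ∈ s) (hj : j ∈ s) (hij : i ≠ j) :
    s.map (swapFn f i j) = s.map f := by
  obtain ⟨t, rfl⟩ := Multiset.exists_cons_of_mem hi
  have hjt : j ∈ t := by
    rcases Multiset.mem_cons.mp hj with h | h
    · exact absurd h.symm hij
    · exact h
  obtain ⟨u, rfl⟩ := Multiset.exists_cons_of_mem hjt
  rw [Multiset.nodup_cons, Multiset.nodup_cons] at hs
  have hiu : i ∉ u := fun h => hs.1 (Multiset.mem_cons_of_mem h)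
  have hju : j ∉ u := hs.2.1
  have hmap : u.map (swapFn f i j) = u.map f := by
    apply Multiset.map_congr rfl
    intro x hx
    have hxi : x ≠ i := fun h => hiu (h ▸ hx)
    have hxj : x ≠ j := fun h => hju (h ▸ hx)
    simp [swapFn, hxi, hxj]
  simp only [Multiset.map_cons, hmap]
  have h1 : swapFn f i j i = f j := by simp [swapFn]
  have h2 : swapFn f i j j = f i := by simp [swapFn, hij.symm]
  rw [h1, h2, Multiset.cons_swap]

lemma map_offblock_eq {f h : ℤ → ℤ} {s : Multiset ℤ}
    (hcong : ∀ x ∈ s, h x = f x) : s.map h = s.map f :=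
  Multiset.map_congr rfl hcong

/-- The lowering operation preserves atypicality, given that the lowered values remain
distinct within each block. -/
lemma atyp_lower {m n : ℕ} {f : ℤ → ℤ} (hf : ZPlus m n f) {i j : ℤ}
    (hi : i ∈ Ineg m) (hj : j ∈ Ipos n) (hfij : f i = f j)
    (hnodN : ((Ineg m).val.map (lowerFn f i j)).Nodup)
    (hnodP : ((Ipos n).val.map (lowerFn f i j)).Nodup) :
    atyp m n (lowerFn f i j) = atyp m n f := by
  classical
  unfold atyp
  congr 1
  apply Finset.filter_congr
  rintro ⟨a, b⟩ hp
  obtain ⟨ha, hb⟩ := Finset.mem_product.mp hp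
  simp only at ha hb ⊢
  show lowerFn f i j a = lowerFn f i j b ↔ f a = f b
  have haj : a ≠ j := ne_of_blocks ha hj
  have hbi : b ≠ i := fun h => (ne_of_blocks hi hb) h.symm
  have hij : i ≠ j := ne_of_blocks hi hj
  have hinjN := Multiset.inj_on_of_nodup_map hnodN
  have hinjP := Multiset.inj_on_of_nodup_map hnodP
  have eI : lowerFn f i j i = f i - 1 := by simp [lowerFn]
  have eJ : lowerFn f i j j = f j - 1 := by simp [lowerFn, hij.symm]
  by_cases h1 : a = i <;> by_cases h2 : b = j
  · rw [h1, h2, eI, eJ]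
    constructor <;> intro <;> omega
  · have hbi' : b ≠ i := h1 ▸ hbi
    have eB : lowerFn f i j b = f b := by simp [lowerFn, hbi', h2]
    rw [h1, eI, eB]
    constructor
    · intro hcontra
      -- f i - 1 = f b, but lowerFn j = f j - 1 = f i - 1 = f b = lowerFn b, so j = b
      exfalso
      have : j = b := hinjP j (Finset.mem_def.mp hj) b (Finset.mem_def.mp hb)
        (by rw [eJ, eB]; omega)
      exact h2 this.symm
    · intro hcontra
      -- f i = f b = f j, injectivity of f on Ipos gives b = j
      exfalso
      exact h2 (injOn_pos hf b hb j hj (by omega))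
  · have hai : a ≠ i := h1
    have haj' : a ≠ j := h2 ▸ haj
    have eA : lowerFn f i j a = f a := by simp [lowerFn, hai, haj']
    rw [h2, eA, eJ]
    constructor
    · intro hcontra
      exfalso
      have : a = i := hinjN a (Finset.mem_def.mp ha) i (Finset.mem_def.mp hi)
        (by rw [eA, eI]; omega)
      exact hai this
    · intro hcontra
      exfalso
      exact h1 (injOn_neg hf a ha i hi (by omega))
  · have eA : lowerFn f i j a = f a := by simp [lowerFn, h1, haj]
    have eB : lowerFn f i j b = f b := by simp [lowerFn, hbi, h2]
    rw [eA, eB]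

lemma atyp_downstep {m n : ℕ} {f g : ℤ → ℤ} (h : DownStep m n f g) :
    atyp m n f = atyp m n g := by
  obtain ⟨hf, hg, hcase⟩ := h
  rcases hcase with ⟨i, hi, j, hj, hfij, hconj⟩ | ⟨i, hi, j, hj, hlt, _, hconj⟩ |
      ⟨i, hi, j, hj, hlt, _, hconj⟩
  · -- lowering case
    have hnodN : ((Ineg m).val.map (lowerFn f i j)).Nodup := by
      rw [← hconj.1]
      exact Multiset.Nodup.map_on
        (fun x hx y hy hxy => injOn_neg hg x (Finset.mem_def.mpr hx) y (Finset.mem_def.mpr hy) hxy)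
        (Ineg m).nodup
    have hnodP : ((Ipos n).val.map (lowerFn f i j)).Nodup := by
      rw [← hconj.2]
      exact Multiset.Nodup.map_on
        (fun x hx y hy hxy => injOn_pos hg x (Finset.mem_def.mpr hx) y (Finset.mem_def.mpr hy) hxy)
        (Ipos n).nodup
    rw [atyp_of_conjEq hconj, atyp_lower hf hi hj hfij hnodN hnodP]
  · -- swap on the negative block
    have hij : i ≠ j := ne_of_lt hlt
    have hc2 : ConjEq m n (swapFn f i j) f := by
      constructor
      · exact map_swapFn_eq (Ineg m).nodup (Finset.mem_def.mp hi) (Finset.mem_def.mp hj) hij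
      · apply map_offblock_eq
        intro x hx
        have hxi : x ≠ i := fun h => (ne_of_blocks hi (Finset.mem_def.mpr hx)) h.symm
        have hxj : x ≠ j := fun h => (ne_of_blocks hj (Finset.mem_def.mpr hx)) h.symm
        simp [swapFn, hxi, hxj]
    rw [atyp_of_conjEq hconj, atyp_of_conjEq hc2]
  · -- swap on the positive block
    have hij : i ≠ j := ne_of_lt hlt
    have hc2 : ConjEq m n (swapFn f i j) f := by
      constructor
      · apply map_offblock_eq
        intro x hx
        have hxi : x ≠ i := ne_of_blocks (Finset.mem_def.mpr hx) hi
        have hxj : x ≠ j := ne_of_blocks (Finset.mem_def.mpr hx) hj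
        simp [swapFn, hxi, hxj]
      · exact map_swapFn_eq (Ipos n).nodup (Finset.mem_def.mp hi) (Finset.mem_def.mp hj) hij
    rw [atyp_of_conjEq hconj, atyp_of_conjEq hc2]

theorem atypicality_constant_on_comparable (m n : ℕ) (f g : ℤ → ℤ)
    (hf : ZPlus m n f) (hg : ZPlus m n g) (h : SuperBruhatGE m n f g) :
    atyp m n f = atyp m n g := by
  clear hf hg
  induction h with
  | refl => rfl
  | tail _ step ih => exact ih.trans (atyp_downstep step)

end Stmt5
end

section
/- There is a bijection ♮ : ℤ^{m+∞}_+ → ℤ^{m|∞}_+ given by f = (f^{<0} | f^{>0}) ↦ (f^{<0} | ℤ∖f^{>0}), i.e., keeping the values on negative indices and replacing the values on positive indices by the complement of their image in ℤ, listed in increasing order. -/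
/-!
Statement 7: the bijection `♮ : ℤ^{m+∞}_+ → ℤ^{m|∞}_+`,
`f = (f^{<0} | f^{>0}) ↦ (f^{<0} | ℤ∖f^{>0})`: keep the values on negative indices, and
replace the values on positive indices by the complement in ℤ of their image, listed
increasingly.  We state this as: every `f ∈ ℤ^{m+∞}_+` corresponds to a unique
`g ∈ ℤ^{m|∞}_+` (unique on the index set `I(m|∞)`) with the complement property, and
conversely.
-/

namespace Stmt7

/-- membership in the index set `I(m|∞) = {-m,…,-1} ∪ {1,2,…}`. -/
def Imem (m : ℕ) (i : ℤ) : Prop := (-(m : ℤ) ≤ i ∧ i ≤ -1) ∨ 1 ≤ i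

/-- `ℤ^{m+∞}_+`: strictly decreasing on `{-m,…,-1}`, strictly decreasing on positive
indices, with `f(i) = 1 − i` for `i ≫ 0`. -/
def ZmInfPlus (m : ℕ) (f : ℤ → ℤ) : Prop :=
  (∀ i j : ℤ, -(m : ℤ) ≤ i → i < j → j ≤ -1 → f j < f i) ∧
  (∀ i : ℤ, 1 ≤ i → f (i + 1) < f i) ∧
  (∃ N : ℤ, ∀ i : ℤ, 1 ≤ i → N ≤ i → f i = 1 - i)

/-- `ℤ^{m|∞}_+`: strictly decreasing on `{-m,…,-1}`, strictly increasing on positive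
indices, with `g(i) = i` for `i ≫ 0`. -/
def ZmInfSuper (m : ℕ) (g : ℤ → ℤ) : Prop :=
  (∀ i j : ℤ, -(m : ℤ) ≤ i → i < j → j ≤ -1 → g j < g i) ∧
  (∀ i : ℤ, 1 ≤ i → g i < g (i + 1)) ∧
  (∃ N : ℤ, ∀ i : ℤ, 1 ≤ i → N ≤ i → g i = i)

/-- `g = f^♮` : same values on negative indices, and the set of values of `g` on positive
indices is the complement in `ℤ` of the set of values of `f` on positive indices. -/
def NaturalRel (f g : ℤ → ℤ) : Prop :=
  (∀ i : ℤ, i ≤ -1 → g i = f i) ∧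
  (∀ a : ℤ, (∃ j : ℤ, 1 ≤ j ∧ g j = a) ↔ ¬ (∃ j : ℤ, 1 ≤ j ∧ f j = a))

lemma mono_of_succ (u : ℤ → ℤ) (h : ∀ i : ℤ, 1 ≤ i → u i < u (i+1)) :
    ∀ i j : ℤ, 1 ≤ i → i < j → u i < u j := by
  intro i j hi hij
  have key : ∀ j : ℤ, i + 1 ≤ j → u i < u j :=
    fun j hj => Int.le_induction (motive := fun j _ => u i < u j) (h i hi)
      (fun k hk ih => ih.trans (h k (by omega))) j hj
  exact key j (by omega)

lemma mono_le_of_succ (u : ℤ → ℤ) (h : ∀ i : ℤ, 1 ≤ i → u i < u (i+1)) :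
    ∀ i j : ℤ, 1 ≤ i → i ≤ j → u i ≤ u j := by
  intro i j hi hij
  rcases eq_or_lt_of_le hij with rfl | hlt
  · exact le_rfl
  · exact (mono_of_succ u h i j hi hlt).le

lemma enum_unique (u v : ℤ → ℤ)
    (hu : ∀ i j : ℤ, 1 ≤ i → i < j → u i < u j)
    (hv : ∀ i j : ℤ, 1 ≤ i → i < j → v i < v j)
    (hset : ∀ a : ℤ, (∃ j : ℤ, 1 ≤ j ∧ u j = a) ↔ (∃ j : ℤ, 1 ≤ j ∧ v j = a)) :
    ∀ i : ℤ, 1 ≤ i → u i = v i := by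
  have key : ∀ n : ℕ, ∀ i : ℤ, 1 ≤ i → i ≤ n → u i = v i := by
    intro n
    induction n using Nat.strong_induction_on with
    | _ n ih =>
      intro i hi hin
      have hn1 : 1 ≤ n := by omega
      obtain ⟨j, hj, hvj⟩ := (hset (u i)).1 ⟨i, hi, rfl⟩
      obtain ⟨j', hj', huj'⟩ := (hset (v i)).2 ⟨i, hi, rfl⟩
      rcases lt_or_ge j i with hji | hji
      · exfalso
        have h1 : u j = v j := ih (n-1) (by omega) j hj (by omega)
        have := hu j i hj hji
        omega
      rcases lt_or_ge j' i with hji' | hji'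
      · exfalso
        have h1 : u j' = v j' := ih (n-1) (by omega) j' hj' (by omega)
        have := hv j' i hj' hji'
        omega
      have h2 : v i ≤ v j := by
        rcases eq_or_lt_of_le hji with rfl | hlt
        · exact le_rfl
        · exact (hv i j hi hlt).le
      have h3 : u i ≤ u j' := by
        rcases eq_or_lt_of_le hji' with rfl | hlt
        · exact le_rfl
        · exact (hu i j' hi hlt).le
      omega
  intro i hi
  exact key i.toNat i hi (by omega)

lemma enum_exists (P : ℤ → Prop) (c B : ℤ)
    (hc : ∀ a : ℤ, a < c → ¬ P a) (hB : ∀ a : ℤ, B ≤ a → P a)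
    (K : Finset ℤ) (hK : ∀ a : ℤ, a ∈ K ↔ (c ≤ a ∧ ¬ P a)) :
    ∃ e : ℤ → ℤ,
      (∀ i : ℤ, 1 ≤ i → e i < e (i+1)) ∧
      (∀ j : ℤ, 1 ≤ j → P (e j)) ∧
      (∀ a : ℤ, P a → ∃ j : ℤ, 1 ≤ j ∧ e j = a) ∧
      (∃ M : ℤ, ∀ i : ℤ, M ≤ i → e i = i + (c + K.card - 1)) := by
  classical
  set p : ℕ → Prop := fun n => P (c + n) with hp
  set n1 : ℕ := (B - c).toNat with hn1def
  have hBc : (B - c : ℤ) ≤ n1 := Int.self_le_toNat _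
  have hn1 : ∀ n : ℕ, n1 ≤ n → p n := by
    intro n hn
    apply hB
    have : (n1 : ℤ) ≤ n := by exact_mod_cast hn
    omega
  have hpi : (setOf p).Infinite :=
    (Set.Ici_infinite n1).mono (fun n hn => hn1 n hn)
  have hcount : ∀ n : ℕ, n1 ≤ n → Nat.count p n + K.card = n := by
    intro n hn
    have himg : ((Finset.range n).filter fun k => ¬ p k).image (fun k : ℕ => c + (k : ℤ)) = K := by
      ext a
      simp only [Finset.mem_image, Finset.mem_filter, Finset.mem_range, hK]
      constructor
      · rintro ⟨k, ⟨hkn, hpk⟩, rfl⟩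
        exact ⟨by omega, hpk⟩
      · rintro ⟨hca, hpa⟩
        refine ⟨(a - c).toNat, ⟨?_, ?_⟩, ?_⟩
        · have haB : a < B := by
            by_contra hh
            exact hpa (hB a (by omega))
          have : (n1 : ℤ) ≤ n := by exact_mod_cast hn
          omega
        · show ¬ P (c + ((a - c).toNat : ℤ))
          rwa [Int.toNat_of_nonneg (by omega), show c + (a - c) = a from by ring]
        · rw [Int.toNat_of_nonneg (by omega)]; ring
    have hinj : Set.InjOn (fun k : ℕ => c + (k : ℤ)) ((Finset.range n).filter fun k => ¬ p k) := by
      intro x _ y _ hxy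
      simp only at hxy
      omega
    have hcard : ((Finset.range n).filter fun k => ¬ p k).card = K.card := by
      rw [← himg, Finset.card_image_of_injOn hinj]
    have hsplit := Finset.card_filter_add_card_filter_not
      (s := Finset.range n) (p := p)
    rw [Nat.count_eq_card_filter_range]
    rw [Finset.card_range] at hsplit
    have hfe : (Finset.filter p (Finset.range n)).card
        = (Finset.filter (fun x => p x) (Finset.range n)).card := rfl
    omega
  have hnth : ∀ k : ℕ, n1 ≤ k → Nat.nth p k = k + K.card := by
    intro k hk
    have h1 : p (k + K.card) := hn1 _ (by omega)
    have h2 := Nat.nth_count (p := p) h1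
    have h3 := hcount (k + K.card) (by omega)
    rwa [show Nat.count p (k + K.card) = k from by omega] at h2
  refine ⟨fun i : ℤ => if 1 ≤ i then c + (Nat.nth p (i - 1).toNat : ℤ) else 0, ?_, ?_, ?_, ?_⟩
  · intro i hi
    beta_reduce
    rw [if_pos hi, if_pos (by omega : (1:ℤ) ≤ i + 1)]
    have h1 : (i + 1 - 1).toNat = (i - 1).toNat + 1 := by omega
    rw [h1]
    have := (Nat.nth_lt_nth hpi (k := (i-1).toNat) (n := (i-1).toNat + 1)).2 (by omega)
    omega
  · intro j hj
    beta_reduce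
    rw [if_pos hj]
    exact Nat.nth_mem_of_infinite hpi _
  · intro a ha
    have hca : c ≤ a := by
      by_contra hh
      exact hc a (by omega) ha
    have hpn : p (a - c).toNat := by
      show P (c + ((a - c).toNat : ℤ))
      rwa [Int.toNat_of_nonneg (by omega), show c + (a - c) = a from by ring]
    refine ⟨(Nat.count p (a - c).toNat : ℤ) + 1, by omega, ?_⟩
    beta_reduce
    rw [if_pos (by omega : (1:ℤ) ≤ (Nat.count p (a - c).toNat : ℤ) + 1)]
    have h1 : ((Nat.count p (a - c).toNat : ℤ) + 1 - 1).toNat = Nat.count p (a - c).toNat := by omega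
    rw [h1, Nat.nth_count hpn, Int.toNat_of_nonneg (by omega)]
    ring
  · refine ⟨(n1 : ℤ) + 1, fun i hi => ?_⟩
    beta_reduce
    rw [if_pos (by omega : (1:ℤ) ≤ i)]
    have hk : n1 ≤ (i - 1).toNat := by omega
    rw [hnth _ hk]
    have : ((i - 1).toNat : ℤ) = i - 1 := by omega
    push_cast
    omega

/-- `♮` is a bijection `ℤ^{m+∞}_+ → ℤ^{m|∞}_+`. -/
theorem natural_bijection (m : ℕ) :
    (∀ f : ℤ → ℤ, ZmInfPlus m f →
      ∃ g : ℤ → ℤ, ZmInfSuper m g ∧ NaturalRel f g ∧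
        ∀ g' : ℤ → ℤ, ZmInfSuper m g' → NaturalRel f g' →
          ∀ i : ℤ, Imem m i → g' i = g i) ∧
    (∀ g : ℤ → ℤ, ZmInfSuper m g →
      ∃ f : ℤ → ℤ, ZmInfPlus m f ∧ NaturalRel f g ∧
        ∀ f' : ℤ → ℤ, ZmInfPlus m f' → NaturalRel f' g →
          ∀ i : ℤ, Imem m i → f' i = f i) := by
  classical
  constructor
  · -- forward direction
    rintro f ⟨hfneg, hfsucc, N0, hN0⟩
    set N : ℤ := max N0 1 with hNdef
    have hN1 : (1:ℤ) ≤ N := le_max_right _ _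
    have hNf : ∀ i : ℤ, N ≤ i → f i = 1 - i := fun i hi => hN0 i (by omega) (by omega)
    have hfanti : ∀ i j : ℤ, 1 ≤ i → i < j → f j < f i := by
      have h := mono_of_succ (fun i => -f i) (fun i hi => by simpa using hfsucc i hi)
      intro i j hi hij
      have := h i j hi hij
      simpa using this
    set P : ℤ → Prop := fun a => ¬ ∃ j : ℤ, 1 ≤ j ∧ f j = a with hPdef
    have hc : ∀ a : ℤ, a < 2 - N → ¬ P a := by
      intro a ha hPa
      exact hPa ⟨1 - a, by omega, by rw [hNf (1 - a) (by omega)]; ring⟩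
    have hB : ∀ a : ℤ, f 1 + 1 ≤ a → P a := by
      rintro a ha ⟨j, hj, rfl⟩
      have hle : f j ≤ f 1 := by
        rcases eq_or_lt_of_le hj with h | h
        · rw [← h]
        · exact (hfanti 1 j le_rfl h).le
      omega
    set K : Finset ℤ := (Finset.Icc (1:ℤ) (N-1)).image f with hKdef
    have hKmem : ∀ a : ℤ, a ∈ K ↔ (2 - N ≤ a ∧ ¬ P a) := by
      intro a
      simp only [hKdef, Finset.mem_image, Finset.mem_Icc, hPdef, not_not]
      constructor
      · rintro ⟨j, ⟨hj1, hj2⟩, rfl⟩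
        refine ⟨?_, ⟨j, hj1, rfl⟩⟩
        have h2 := hfanti j N hj1 (by omega)
        rw [hNf N le_rfl] at h2
        omega
      · rintro ⟨ha, j, hj, rfl⟩
        refine ⟨j, ⟨hj, ?_⟩, rfl⟩
        by_contra hh
        rw [hNf j (by omega)] at ha
        omega
    have hKcard : (K.card : ℤ) = N - 1 := by
      have hinj : Set.InjOn f (Finset.Icc (1:ℤ) (N-1)) := by
        intro x hx y hy hxy
        by_contra hne
        rcases lt_or_gt_of_ne hne with h | h
        · have := hfanti x y ((Finset.mem_Icc.1 (Finset.mem_coe.1 hx)).1) h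
          omega
        · have := hfanti y x ((Finset.mem_Icc.1 (Finset.mem_coe.1 hy)).1) h
          omega
      have h1 : K.card = (Finset.Icc (1:ℤ) (N-1)).card := by
        rw [hKdef]; exact Finset.card_image_of_injOn hinj
      rw [h1, Int.card_Icc]
      omega
    obtain ⟨e, he1, he2, he3, M, he4⟩ := enum_exists P (2 - N) (f 1 + 1) hc hB K hKmem
    have he4' : ∀ i : ℤ, M ≤ i → e i = i := by
      intro i hi
      have := he4 i hi
      omega
    set g : ℤ → ℤ := fun i => if 1 ≤ i then e i else f i with hgdef
    have hgpos : ∀ i : ℤ, 1 ≤ i → g i = e i := fun i hi => if_pos hi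
    have hgneg : ∀ i : ℤ, i ≤ -1 → g i = f i := fun i hi => if_neg (by omega)
    have hsuper : ZmInfSuper m g := by
      refine ⟨?_, ?_, ⟨max M 1, ?_⟩⟩
      · intro i j hi hij hj
        rw [hgneg j hj, hgneg i (by omega)]
        exact hfneg i j hi hij hj
      · intro i hi
        rw [hgpos i hi, hgpos (i+1) (by omega)]
        exact he1 i hi
      · intro i hi hMi
        rw [hgpos i hi]
        exact he4' i (by omega)
    have hnat : NaturalRel f g := by
      refine ⟨fun i hi => hgneg i hi, fun a => ?_⟩
      constructor
      · rintro ⟨j, hj, rfl⟩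
        rw [hgpos j hj]
        exact he2 j hj
      · intro ha
        obtain ⟨j, hj, hej⟩ := he3 a ha
        exact ⟨j, hj, by rw [hgpos j hj]; exact hej⟩
    refine ⟨g, hsuper, hnat, ?_⟩
    intro g' hg' hrel i hi
    rcases hi with ⟨_, hi⟩ | hi
    · rw [hgneg i hi]
      exact hrel.1 i hi
    · have hs : ∀ a : ℤ, (∃ j : ℤ, 1 ≤ j ∧ g' j = a) ↔ (∃ j : ℤ, 1 ≤ j ∧ g j = a) :=
        fun a => (hrel.2 a).trans (hnat.2 a).symm
      exact enum_unique g' g (mono_of_succ g' hg'.2.1) (mono_of_succ g hsuper.2.1) hs i hi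
  · -- converse direction
    rintro g ⟨hgneg', hgsucc, N0, hN0⟩
    set N : ℤ := max N0 1 with hNdef
    have hN1 : (1:ℤ) ≤ N := le_max_right _ _
    have hNg : ∀ i : ℤ, N ≤ i → g i = i := fun i hi => hN0 i (by omega) (by omega)
    have hgmono := mono_of_succ g hgsucc
    set P : ℤ → Prop := fun a => ¬ ∃ j : ℤ, 1 ≤ j ∧ g j = -a with hPdef
    have hc : ∀ a : ℤ, a < 1 - N → ¬ P a := by
      intro a ha hPa
      exact hPa ⟨-a, by omega, by rw [hNg (-a) (by omega)]⟩
    have hB : ∀ a : ℤ, 1 - g 1 ≤ a → P a := by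
      rintro a ha ⟨j, hj, hgj⟩
      have hle : g 1 ≤ g j := mono_le_of_succ g hgsucc 1 j le_rfl hj
      omega
    set K : Finset ℤ := (Finset.Icc (1:ℤ) (N-1)).image (fun j => -g j) with hKdef
    have hKmem : ∀ a : ℤ, a ∈ K ↔ (1 - N ≤ a ∧ ¬ P a) := by
      intro a
      simp only [hKdef, Finset.mem_image, Finset.mem_Icc, hPdef, not_not]
      constructor
      · rintro ⟨j, ⟨hj1, hj2⟩, rfl⟩
        have h2 := hgmono j N hj1 (by omega)
        rw [hNg N le_rfl] at h2
        exact ⟨by omega, ⟨j, hj1, by ring⟩⟩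
      · rintro ⟨ha, j, hj, hgj⟩
        refine ⟨j, ⟨hj, ?_⟩, by omega⟩
        by_contra hh
        rw [hNg j (by omega)] at hgj
        omega
    have hKcard : (K.card : ℤ) = N - 1 := by
      have hinj : Set.InjOn (fun j => -g j) (Finset.Icc (1:ℤ) (N-1)) := by
        intro x hx y hy hxy
        simp only at hxy
        by_contra hne
        rcases lt_or_gt_of_ne hne with h | h
        · have := hgmono x y ((Finset.mem_Icc.1 (Finset.mem_coe.1 hx)).1) h
          omega
        · have := hgmono y x ((Finset.mem_Icc.1 (Finset.mem_coe.1 hy)).1) h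
          omega
      have h1 : K.card = (Finset.Icc (1:ℤ) (N-1)).card := by
        rw [hKdef]; exact Finset.card_image_of_injOn hinj
      rw [h1, Int.card_Icc]
      omega
    obtain ⟨e, he1, he2, he3, M, he4⟩ := enum_exists P (1 - N) (1 - g 1) hc hB K hKmem
    have he4' : ∀ i : ℤ, M ≤ i → e i = i - 1 := by
      intro i hi
      have := he4 i hi
      omega
    set f : ℤ → ℤ := fun i => if 1 ≤ i then -e i else g i with hfdef
    have hfpos : ∀ i : ℤ, 1 ≤ i → f i = -e i := fun i hi => if_pos hi
    have hfneg : ∀ i : ℤ, i ≤ -1 → f i = g i := fun i hi => if_neg (by omega)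
    have hplus : ZmInfPlus m f := by
      refine ⟨?_, ?_, ⟨max M 1, ?_⟩⟩
      · intro i j hi hij hj
        rw [hfneg j hj, hfneg i (by omega)]
        exact hgneg' i j hi hij hj
      · intro i hi
        rw [hfpos i hi, hfpos (i+1) (by omega)]
        have := he1 i hi
        omega
      · intro i hi hMi
        rw [hfpos i hi, he4' i (by omega)]
        ring
    have hnat : NaturalRel f g := by
      refine ⟨fun i hi => (hfneg i hi).symm, fun a => ?_⟩
      constructor
      · rintro ⟨j, hj, hgj⟩ ⟨k, hk, hfk⟩
        rw [hfpos k hk] at hfk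
        exact he2 k hk ⟨j, hj, by omega⟩
      · intro hna
        by_contra hnt
        have hPa : P (-a) := by
          intro ⟨j, hj, hgj⟩
          exact hnt ⟨j, hj, by omega⟩
        obtain ⟨j, hj, hej⟩ := he3 (-a) hPa
        exact hna ⟨j, hj, by rw [hfpos j hj]; omega⟩
    refine ⟨f, hplus, hnat, ?_⟩
    intro f' hf' hrel i hi
    rcases hi with ⟨_, hi⟩ | hi
    · rw [hfneg i hi]
      exact (hrel.1 i hi).symm
    · have hs : ∀ a : ℤ, (∃ j : ℤ, 1 ≤ j ∧ -f' j = a) ↔ (∃ j : ℤ, 1 ≤ j ∧ -f j = a) := by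
        intro a
        have h1 : (∃ j : ℤ, 1 ≤ j ∧ -f' j = a) ↔ (∃ j : ℤ, 1 ≤ j ∧ f' j = -a) := by
          constructor
          · rintro ⟨j, hj, h⟩; exact ⟨j, hj, by omega⟩
          · rintro ⟨j, hj, h⟩; exact ⟨j, hj, by omega⟩
        have h2 : (∃ j : ℤ, 1 ≤ j ∧ -f j = a) ↔ (∃ j : ℤ, 1 ≤ j ∧ f j = -a) := by
          constructor
          · rintro ⟨j, hj, h⟩; exact ⟨j, hj, by omega⟩
          · rintro ⟨j, hj, h⟩; exact ⟨j, hj, by omega⟩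
        rw [h1, h2, iff_not_comm.mp (hrel.2 (-a)), iff_not_comm.mp (hnat.2 (-a))]
      have hu := mono_of_succ (fun i => -f' i) (fun i hi => by
        have := hf'.2.1 i hi; simpa using this)
      have hv := mono_of_succ (fun i => -f i) (fun i hi => by
        have := hplus.2.1 i hi; simpa using this)
      have := enum_unique (fun i => -f' i) (fun i => -f i) hu hv hs i hi
      omega

end Stmt7
end
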